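/- Let μ : (a,b) → ℝ solve μ' = μ² + C with μ(0) = μ₀, and suppose μ₀² + C ≠ 0. Fix d, f₀ ∈ ℝ and define f(x) := d·∫₀ˣ exp(2∫₀ʸ μ(z) dz) dy + f₀. Then f(x) = d·(μ(x) - μ₀)/(μ₀² + C) + f₀ for all x ∈ (a,b), and f satisfies the Riccati-type equation f'(x) = e₁ f(x)² + e₂ f(x) + e₃ for suitable constants e₁, e₂, e₃ ∈ ℝ. -/

import Mathlib

open Set intervalIntegral MeasureTheory

lemma const_of_hasDerivAt_zero {s : Set ℝ} (hs : Convex ℝ s) (ho : IsOpen s)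
    {F : ℝ → ℝ} (h : ∀ x ∈ s, HasDerivAt F 0 x) {x y : ℝ} (hx : x ∈ s) (hy : y ∈ s) :
    F x = F y := by
  apply hs.is_const_of_fderivWithin_eq_zero
    (fun z hz => ((h z hz).differentiableAt).differentiableWithinAt) ?_ hx hy
  intro z hz
  rw [fderivWithin_of_isOpen ho hz, (h z hz).hasFDerivAt.fderiv]
  ext; simp

theorem stmt_3 (a b C μ₀ d f₀ : ℝ) (μ : ℝ → ℝ) (ha : a < 0) (hb : 0 < b)
    (hode : ∀ x ∈ Set.Ioo a b, HasDerivAt μ (μ x ^ 2 + C) x)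
    (hinit : μ 0 = μ₀) (hC : μ₀ ^ 2 + C ≠ 0)
    (f : ℝ → ℝ)
    (hf : ∀ x, f x = d * (∫ y in (0:ℝ)..x, Real.exp (2 * ∫ z in (0:ℝ)..y, μ z)) + f₀) :
    (∀ x ∈ Set.Ioo a b, f x = d * (μ x - μ₀) / (μ₀ ^ 2 + C) + f₀) ∧
    ∃ e₁ e₂ e₃ : ℝ, ∀ x ∈ Set.Ioo a b,
      HasDerivAt f (e₁ * f x ^ 2 + e₂ * f x + e₃) x := by
  have h0 : (0:ℝ) ∈ Set.Ioo a b := ⟨ha, hb⟩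
  have hμc : ContinuousOn μ (Set.Ioo a b) := fun x hx =>
    (hode x hx).continuousAt.continuousWithinAt
  -- derivative of I x := ∫₀ˣ μ
  set I : ℝ → ℝ := fun x => ∫ z in (0:ℝ)..x, μ z with hI
  have hId : ∀ x ∈ Set.Ioo a b, HasDerivAt I (μ x) x := by
    intro x hx
    have hsub : Set.uIcc (0:ℝ) x ⊆ Set.Ioo a b := Set.ordConnected_Ioo.uIcc_subset h0 hx
    exact integral_hasDerivAt_right ((hμc.mono hsub).intervalIntegrable)
      (hμc.stronglyMeasurableAtFilter isOpen_Ioo x hx) (hode x hx).continuousAt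
  -- key identity: (μ x ^ 2 + C) * exp (-(2 * I x)) is constant = μ₀² + C
  have hFd : ∀ x ∈ Set.Ioo a b,
      HasDerivAt (fun x => (μ x ^ 2 + C) * Real.exp (-(2 * I x))) 0 x := by
    intro x hx
    have h1 : HasDerivAt (fun x => μ x ^ 2 + C)
        (2 * μ x * (μ x ^ 2 + C)) x := by
      simpa [mul_comm] using (((hode x hx).pow 2).add_const C)
    have h2 : HasDerivAt (fun x => Real.exp (-(2 * I x)))
        (Real.exp (-(2 * I x)) * (-(2 * μ x))) x :=
      (((hId x hx).const_mul 2).neg).exp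
    have := h1.mul h2
    exact this.congr_deriv (by ring)
  have hkey : ∀ x ∈ Set.Ioo a b,
      (μ x ^ 2 + C) * Real.exp (-(2 * I x)) = μ₀ ^ 2 + C := by
    intro x hx
    have := const_of_hasDerivAt_zero (convex_Ioo a b) isOpen_Ioo hFd hx h0
    simpa [hI, hinit] using this
  have hexp : ∀ x ∈ Set.Ioo a b,
      Real.exp (2 * I x) = (μ x ^ 2 + C) / (μ₀ ^ 2 + C) := by
    intro x hx
    have h := hkey x hx
    rw [Real.exp_neg] at h
    field_simp at h ⊢
    rw [h]
  -- derivative of f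
  have hEc : ContinuousOn (fun y => Real.exp (2 * I y)) (Set.Ioo a b) := by
    apply Real.continuous_exp.comp_continuousOn
    exact (continuousOn_const.mul (fun x hx => ((hId x hx).continuousAt.continuousWithinAt)))
  have hfd : ∀ x ∈ Set.Ioo a b,
      HasDerivAt f (d * ((μ x ^ 2 + C) / (μ₀ ^ 2 + C))) x := by
    intro x hx
    have hsub : Set.uIcc (0:ℝ) x ⊆ Set.Ioo a b := Set.ordConnected_Ioo.uIcc_subset h0 hx
    have hE : HasDerivAt (fun u => ∫ y in (0:ℝ)..u, Real.exp (2 * I y))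
        (Real.exp (2 * I x)) x :=
      integral_hasDerivAt_right ((hEc.mono hsub).intervalIntegrable)
        (hEc.stronglyMeasurableAtFilter isOpen_Ioo x hx)
        (hEc.continuousAt (isOpen_Ioo.mem_nhds hx))
    have : HasDerivAt f (d * Real.exp (2 * I x)) x := by
      have := (hE.const_mul d).add_const f₀
      exact this.congr_of_eventuallyEq (Filter.Eventually.of_forall fun y => hf y)
    rwa [hexp x hx] at this
  -- part 1
  have hpart1 : ∀ x ∈ Set.Ioo a b, f x = d * (μ x - μ₀) / (μ₀ ^ 2 + C) + f₀ := by
    intro x hx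
    have hGd : ∀ x ∈ Set.Ioo a b,
        HasDerivAt (fun x => f x - (d * (μ x - μ₀) / (μ₀ ^ 2 + C) + f₀)) 0 x := by
      intro x hx
      have h1 : HasDerivAt (fun x => d * (μ x - μ₀) / (μ₀ ^ 2 + C) + f₀)
          (d * (μ x ^ 2 + C) / (μ₀ ^ 2 + C)) x := by
        have := ((((hode x hx).sub_const μ₀).const_mul d).div_const (μ₀ ^ 2 + C)).add_const f₀
        convert this using 1
      have := (hfd x hx).sub h1
      exact this.congr_deriv (by ring)
    have := const_of_hasDerivAt_zero (convex_Ioo a b) isOpen_Ioo hGd hx h0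
    have hf0 : f 0 = f₀ := by simp [hf 0]
    rw [hf0, hinit] at this
    simp at this
    linarith [this]
  refine ⟨hpart1, ?_⟩
  by_cases hd : d = 0
  · refine ⟨0, 0, 0, fun x hx => ?_⟩
    have : HasDerivAt f 0 x := by
      have : f = fun _ => f₀ := funext fun y => by simp [hf y, hd]
      rw [this]; exact hasDerivAt_const x f₀
    simpa using this
  · refine ⟨(μ₀ ^ 2 + C) / d, 2 * μ₀ - 2 * ((μ₀ ^ 2 + C) / d) * f₀,
      ((μ₀ ^ 2 + C) / d) * f₀ ^ 2 - 2 * μ₀ * f₀ + d, fun x hx => ?_⟩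
    have h1 := hpart1 x hx
    have hμx : μ x = (μ₀ ^ 2 + C) / d * (f x - f₀) + μ₀ := by
      rw [h1]; field_simp; ring
    have := hfd x hx
    convert this using 1
    rw [hμx]
    field_simp
    ring
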